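/- For every even n ≥ 4, the 3-rainbow domatic number of the middle graph of the path P_n equals 4, i.e., d_{r3}(M(P_n)) = 4. -/

import Mathlib

open SimpleGraph Finset

/-- A `k`-rainbow dominating function on a graph `H`. -/
def IsRDF {W : Type*} (H : SimpleGraph W) (k : ℕ) (f : W → Finset (Fin k)) : Prop :=
  ∀ w, f w = ∅ → ∀ c : Fin k, ∃ u, H.Adj w u ∧ c ∈ f u

/-- The weight of a rainbow dominating function. -/
noncomputable def rdfWeight {W : Type*} [Fintype W] {k : ℕ} (f : W → Finset (Fin k)) : ℕ :=
  ∑ w, (f w).card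

/-- The `k`-rainbow domination number of a graph. -/
noncomputable def rdn {W : Type*} [Fintype W] (H : SimpleGraph W) (k : ℕ) : ℕ :=
  sInf {n | ∃ f : W → Finset (Fin k), IsRDF H k f ∧ rdfWeight f = n}

/-- The middle graph of `G`, on vertex set `V(G) ⊕ E(G)`. -/
def middleGraph {V : Type*} (G : SimpleGraph V) : SimpleGraph (V ⊕ G.edgeSet) where
  Adj x y :=
    match x, y with
    | Sum.inl _, Sum.inl _ => False
    | Sum.inl v, Sum.inr e => v ∈ (e : Sym2 V)
    | Sum.inr e, Sum.inl v => v ∈ (e : Sym2 V)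
    | Sum.inr e, Sum.inr f => e ≠ f ∧ ∃ v, v ∈ (e : Sym2 V) ∧ v ∈ (f : Sym2 V)
  symm := by
    constructor
    rintro (v | e) (w | f) h
    · exact h.elim
    · exact h
    · exact h
    · exact ⟨Ne.symm h.1, h.2.imp fun v hv => ⟨hv.2, hv.1⟩⟩
  loopless := by
    constructor
    rintro (v | e) h
    · exact h.elim
    · exact h.1 rfl

/-- The middle `k`-rainbow domination number `γ*_{rk}(G)`. -/
noncomputable def mrdn {V : Type*} [Fintype V] (G : SimpleGraph V) (k : ℕ) : ℕ :=
  letI := Classical.decEq V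
  letI : DecidableRel G.Adj := fun _ _ => Classical.dec _
  rdn (middleGraph G) k

/-- The `k`-rainbow domatic number: the maximum size of a family of `k`-rainbow
dominating functions with `∑ i |f i v| ≤ k` for each vertex `v`. -/
noncomputable def rdomatic {W : Type*} (H : SimpleGraph W) (k : ℕ) : ℕ :=
  sSup {d | ∃ F : Fin d → W → Finset (Fin k), Function.Injective F ∧
    (∀ i, IsRDF H k (F i)) ∧ ∀ w, (∑ i, (F i w).card) ≤ k}

/-- The matching number `α'(G)`. -/
noncomputable def matchingNumber {V : Type*} [Fintype V] (G : SimpleGraph V) : ℕ :=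
  sSup {n | ∃ M : Finset (Sym2 V), ↑M ⊆ G.edgeSet ∧
    (∀ e ∈ M, ∀ f ∈ M, e ≠ f → ∀ v : V, ¬(v ∈ e ∧ v ∈ f)) ∧ M.card = n}


lemma edge_struct {n : ℕ} {e : Sym2 (Fin n)} (he : e ∈ (pathGraph n).edgeSet) :
    ∃ j : ℕ, ∃ hj : j + 1 < n,
      e = s((⟨j, by omega⟩ : Fin n), ⟨j + 1, hj⟩) ∧ ((Sym2.inf e) : Fin n).val = j := by
  induction e using Sym2.ind with
  | _ a b =>
    rw [SimpleGraph.mem_edgeSet, pathGraph_adj] at he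
    rcases he with h | h
    · refine ⟨a.val, by omega, ?_, ?_⟩
      · congr 1
        simp only [Prod.ext_iff, Fin.ext_iff]
        omega
      · rw [Sym2.inf_mk]
        have : a ⊓ b = a := inf_eq_left.mpr (by rw [Fin.le_def]; omega)
        rw [this]
    · refine ⟨b.val, by omega, ?_, ?_⟩
      · rw [Sym2.eq_swap]
        congr 1
        simp only [Prod.ext_iff, Fin.ext_iff]
        omega
      · rw [Sym2.inf_mk]
        have : a ⊓ b = b := inf_eq_right.mpr (by rw [Fin.le_def]; omega)
        rw [this]

/-- The edge `{j, j+1}` of the path graph. -/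
def pe (n j : ℕ) (hj : j + 1 < n) : ((pathGraph n).edgeSet : Set (Sym2 (Fin n))) :=
  ⟨s((⟨j, by omega⟩ : Fin n), ⟨j + 1, hj⟩), by
    exact (SimpleGraph.mem_edgeSet _).mpr (pathGraph_adj.mpr (Or.inl rfl))⟩

lemma inf_pe (n j : ℕ) (hj : j + 1 < n) :
    ((Sym2.inf ((pe n j hj : ((pathGraph n).edgeSet : Set (Sym2 (Fin n)))) : Sym2 (Fin n))) : Fin n).val = j := by
  show (Sym2.inf s((⟨j, by omega⟩ : Fin n), ⟨j + 1, hj⟩)).val = j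
  rw [Sym2.inf_mk]
  have : (⟨j, by omega⟩ : Fin n) ⊓ ⟨j + 1, hj⟩ = ⟨j, by omega⟩ :=
    inf_eq_left.mpr (Fin.mk_le_mk.mpr (by omega))
  rw [this]


/-- color `m % 3` -/
def col (m : ℕ) : Fin 3 := ⟨m % 3, Nat.mod_lt _ (by norm_num)⟩

/-- The four rainbow dominating functions on the middle graph of the path. -/
def Fc (n : ℕ) (i : Fin 4) :
    (Fin n ⊕ ((pathGraph n).edgeSet : Set (Sym2 (Fin n)))) → Finset (Fin 3) := fun w =>
  match w with
  | Sum.inl v => if i = 0 then ∅ else if Even v.val then {col (i.val - 1)} else {col i.val}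
  | Sum.inr e =>
      if i = 0 then (if Even ((Sym2.inf (e : Sym2 (Fin n))) : Fin n).val then Finset.univ else ∅)
      else (if Even ((Sym2.inf (e : Sym2 (Fin n))) : Fin n).val then ∅ else {col (i.val + 1)})

lemma mem_pe_left (n j : ℕ) (hj : j + 1 < n) (v : Fin n) (hv : v.val = j) :
    v ∈ ((pe n j hj : ((pathGraph n).edgeSet : Set (Sym2 (Fin n)))) : Sym2 (Fin n)) := by
  show v ∈ s((⟨j, by omega⟩ : Fin n), ⟨j + 1, hj⟩)
  rw [Sym2.mem_iff]
  exact Or.inl (Fin.ext hv)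

lemma mem_pe_right (n j : ℕ) (hj : j + 1 < n) (v : Fin n) (hv : v.val = j + 1) :
    v ∈ ((pe n j hj : ((pathGraph n).edgeSet : Set (Sym2 (Fin n)))) : Sym2 (Fin n)) := by
  show v ∈ s((⟨j, by omega⟩ : Fin n), ⟨j + 1, hj⟩)
  rw [Sym2.mem_iff]
  exact Or.inr (Fin.ext hv)

lemma rdf0 (n : ℕ) (hn : 4 ≤ n) (he : Even n) :
    IsRDF (middleGraph (pathGraph n)) 3 (Fc n 0) := by
  obtain ⟨m, hm⟩ := he
  rintro (v | e) hw c
  · by_cases hv : Even v.val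
    · obtain ⟨a, ha⟩ := hv
      have hlt : v.val + 1 < n := by omega
      refine ⟨Sum.inr (pe n v.val hlt), mem_pe_left n v.val hlt v rfl, ?_⟩
      have : Even ((Sym2.inf ((pe n v.val hlt : ((pathGraph n).edgeSet : Set (Sym2 (Fin n)))) : Sym2 (Fin n))) : Fin n).val := by
        rw [inf_pe]; exact ⟨a, ha⟩
      simp [Fc, this]
    · rw [Nat.not_even_iff] at hv
      have hlt : (v.val - 1) + 1 < n := by omega
      refine ⟨Sum.inr (pe n (v.val - 1) hlt), mem_pe_right n (v.val - 1) hlt v (by omega), ?_⟩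
      have : Even ((Sym2.inf ((pe n (v.val - 1) hlt : ((pathGraph n).edgeSet : Set (Sym2 (Fin n)))) : Sym2 (Fin n))) : Fin n).val := by
        rw [inf_pe]; rw [Nat.even_iff]; omega
      simp [Fc, this]
  · obtain ⟨j, hj, hesk, hinf⟩ := edge_struct e.2
    have hodd : ¬ Even j := by
      intro hev
      rw [show (Fc n 0 (Sum.inr e)) = if Even ((Sym2.inf (e : Sym2 (Fin n))) : Fin n).val then Finset.univ else ∅ from rfl] at hw
      rw [hinf, if_pos hev] at hw
      exact absurd hw (by simp [Finset.eq_empty_iff_forall_notMem])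
    rw [Nat.not_even_iff] at hodd
    have hlt : (j - 1) + 1 < n := by omega
    refine ⟨Sum.inr (pe n (j - 1) hlt), ?_, ?_⟩
    · constructor
      · intro heq
        have h2 : ((⟨j + 1, hj⟩ : Fin n) : Fin n) ∈ ((pe n (j-1) hlt : ((pathGraph n).edgeSet : Set (Sym2 (Fin n)))) : Sym2 (Fin n)) := by
          rw [← heq, hesk, Sym2.mem_iff]; right; rfl
        rw [show ((pe n (j-1) hlt : ((pathGraph n).edgeSet : Set (Sym2 (Fin n)))) : Sym2 (Fin n)) = s((⟨j-1, by omega⟩ : Fin n), ⟨(j-1) + 1, hlt⟩) from rfl, Sym2.mem_iff, Fin.ext_iff, Fin.ext_iff] at h2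
        simp only [] at h2
        omega
      · refine ⟨⟨j, by omega⟩, ?_, mem_pe_right n (j-1) hlt _ (by show j = j - 1 + 1; omega)⟩
        have hh : (⟨j, by omega⟩ : Fin n) ∈ s((⟨j, by omega⟩ : Fin n), (⟨j + 1, hj⟩ : Fin n)) :=
          Sym2.mem_mk_left _ _
        rwa [← hesk] at hh
    · have : Even ((Sym2.inf ((pe n (j-1) hlt : ((pathGraph n).edgeSet : Set (Sym2 (Fin n)))) : Sym2 (Fin n))) : Fin n).val := by
        rw [inf_pe]; rw [Nat.even_iff]; omega
      simp [Fc, this]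

lemma col_cases (i : Fin 4) (hi : i ≠ 0) (c : Fin 3) :
    c = col (i.val - 1) ∨ c = col i.val ∨ c = col (i.val + 1) := by
  have h3 : c.val < 3 := c.isLt
  have h4 : i.val < 4 := i.isLt
  have hi0 : i.val ≠ 0 := fun h => hi (Fin.ext h)
  simp only [col, Fin.ext_iff]
  omega

lemma rdfi (n : ℕ) (hn : 4 ≤ n) (i : Fin 4) (hi : i ≠ 0) :
    IsRDF (middleGraph (pathGraph n)) 3 (Fc n i) := by
  rintro (v | e) hw c
  · exfalso
    rw [show Fc n i (Sum.inl v) = if i = 0 then ∅ else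
        if Even v.val then {col (i.val - 1)} else {col i.val} from rfl, if_neg hi] at hw
    split_ifs at hw <;> exact absurd hw (Finset.singleton_ne_empty _)
  · obtain ⟨j, hj, hesk, hinf⟩ := edge_struct e.2
    have heven : Even j := by
      by_contra hev
      rw [show Fc n i (Sum.inr e) = if i = 0 then
          (if Even ((Sym2.inf (e : Sym2 (Fin n))) : Fin n).val then Finset.univ else ∅)
          else (if Even ((Sym2.inf (e : Sym2 (Fin n))) : Fin n).val then ∅ else {col (i.val + 1)}) from rfl,
        if_neg hi, hinf, if_neg hev] at hw
      exact absurd hw (Finset.singleton_ne_empty _)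
    rcases col_cases i hi c with hc | hc | hc
    · -- use vertex j (even)
      refine ⟨Sum.inl ⟨j, by omega⟩, ?_, ?_⟩
      · show (⟨j, by omega⟩ : Fin n) ∈ (e : Sym2 (Fin n))
        have hh : (⟨j, by omega⟩ : Fin n) ∈ s((⟨j, by omega⟩ : Fin n), (⟨j + 1, hj⟩ : Fin n)) :=
          Sym2.mem_mk_left _ _
        rwa [← hesk] at hh
      · rw [show Fc n i (Sum.inl ⟨j, by omega⟩) = if i = 0 then ∅ else
            if Even j then {col (i.val - 1)} else {col i.val} from rfl, if_neg hi, if_pos heven, hc]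
        exact Finset.mem_singleton_self _
    · -- use vertex j+1 (odd)
      refine ⟨Sum.inl ⟨j + 1, hj⟩, ?_, ?_⟩
      · show (⟨j + 1, hj⟩ : Fin n) ∈ (e : Sym2 (Fin n))
        have hh : (⟨j + 1, hj⟩ : Fin n) ∈ s((⟨j, by omega⟩ : Fin n), (⟨j + 1, hj⟩ : Fin n)) :=
          Sym2.mem_mk_right _ _
        rwa [← hesk] at hh
      · have hodd : ¬ Even (j + 1) := by rcases heven with ⟨a, ha⟩; rw [Nat.even_iff]; omega
        rw [show Fc n i (Sum.inl ⟨j + 1, hj⟩) = if i = 0 then ∅ else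
            if Even (j + 1) then {col (i.val - 1)} else {col i.val} from rfl, if_neg hi, if_neg hodd, hc]
        exact Finset.mem_singleton_self _
    · -- use an odd-indexed edge adjacent to e
      obtain ⟨a, ha⟩ := heven
      by_cases hcase : j + 2 < n
      · -- edge (j+1, j+2)
        refine ⟨Sum.inr (pe n (j + 1) hcase), ?_, ?_⟩
        · refine ⟨?_, ⟨j + 1, hj⟩, ?_, mem_pe_left n (j + 1) hcase _ rfl⟩
          · intro heq
            have hne : s((⟨j + 1, by omega⟩ : Fin n), (⟨(j + 1) + 1, hcase⟩ : Fin n)) =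
                s((⟨j, by omega⟩ : Fin n), (⟨j + 1, hj⟩ : Fin n)) :=
              (congrArg Subtype.val heq).symm.trans hesk
            rw [Sym2.eq_iff] at hne
            simp only [Fin.mk.injEq] at hne
            omega
          · have hh : (⟨j + 1, hj⟩ : Fin n) ∈ s((⟨j, by omega⟩ : Fin n), (⟨j + 1, hj⟩ : Fin n)) :=
              Sym2.mem_mk_right _ _
            rwa [← hesk] at hh
        · have : ¬ Even ((Sym2.inf ((pe n (j+1) hcase : ((pathGraph n).edgeSet : Set (Sym2 (Fin n)))) : Sym2 (Fin n))) : Fin n).val := by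
            rw [inf_pe, Nat.even_iff]; omega
          rw [show Fc n i (Sum.inr (pe n (j+1) hcase)) = if i = 0 then
              (if Even ((Sym2.inf ((pe n (j+1) hcase : ((pathGraph n).edgeSet : Set (Sym2 (Fin n)))) : Sym2 (Fin n))) : Fin n).val then Finset.univ else ∅)
              else (if Even ((Sym2.inf ((pe n (j+1) hcase : ((pathGraph n).edgeSet : Set (Sym2 (Fin n)))) : Sym2 (Fin n))) : Fin n).val then ∅ else {col (i.val + 1)}) from rfl,
            if_neg hi, if_neg this, hc]
          exact Finset.mem_singleton_self _
      · -- j = n - 2 ≥ 2; edge (j-1, j)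
        have hj2 : 2 ≤ j := by omega
        have hlt : (j - 1) + 1 < n := by omega
        refine ⟨Sum.inr (pe n (j - 1) hlt), ?_, ?_⟩
        · refine ⟨?_, ⟨j, by omega⟩, ?_, mem_pe_right n (j - 1) hlt _ (by show j = j - 1 + 1; omega)⟩
          · intro heq
            have hne : s((⟨j - 1, by omega⟩ : Fin n), (⟨(j - 1) + 1, hlt⟩ : Fin n)) =
                s((⟨j, by omega⟩ : Fin n), (⟨j + 1, hj⟩ : Fin n)) :=
              (congrArg Subtype.val heq).symm.trans hesk
            rw [Sym2.eq_iff] at hne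
            simp only [Fin.mk.injEq] at hne
            omega
          · have hh : (⟨j, by omega⟩ : Fin n) ∈ s((⟨j, by omega⟩ : Fin n), (⟨j + 1, hj⟩ : Fin n)) :=
              Sym2.mem_mk_left _ _
            rwa [← hesk] at hh
        · have : ¬ Even ((Sym2.inf ((pe n (j-1) hlt : ((pathGraph n).edgeSet : Set (Sym2 (Fin n)))) : Sym2 (Fin n))) : Fin n).val := by
            rw [inf_pe, Nat.even_iff]; omega
          rw [show Fc n i (Sum.inr (pe n (j-1) hlt)) = if i = 0 then
              (if Even ((Sym2.inf ((pe n (j-1) hlt : ((pathGraph n).edgeSet : Set (Sym2 (Fin n)))) : Sym2 (Fin n))) : Fin n).val then Finset.univ else ∅)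
              else (if Even ((Sym2.inf ((pe n (j-1) hlt : ((pathGraph n).edgeSet : Set (Sym2 (Fin n)))) : Sym2 (Fin n))) : Fin n).val then ∅ else {col (i.val + 1)}) from rfl,
            if_neg hi, if_neg this, hc]
          exact Finset.mem_singleton_self _

lemma sum_bound (n : ℕ) (w : Fin n ⊕ ((pathGraph n).edgeSet : Set (Sym2 (Fin n)))) :
    (∑ i : Fin 4, (Fc n i w).card) ≤ 3 := by
  rw [Fin.sum_univ_four]
  rcases w with v | e <;>
    simp only [Fc] <;> split_ifs <;> simp_all

lemma Fc_inj (n : ℕ) (hn : 4 ≤ n) : Function.Injective (Fc n) := by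
  intro i j hij
  have h0 := congrFun hij (Sum.inl ⟨0, by omega⟩)
  have h1 : (if i = 0 then (∅ : Finset (Fin 3)) else {col (i.val - 1)}) =
      (if j = 0 then (∅ : Finset (Fin 3)) else {col (j.val - 1)}) := h0
  clear h0 hij
  fin_cases i <;> fin_cases j <;> revert h1 <;> decide

lemma ub (n d : ℕ) (hn : 4 ≤ n)
    (F : Fin d → (Fin n ⊕ ((pathGraph n).edgeSet : Set (Sym2 (Fin n)))) → Finset (Fin 3))
    (hrdf : ∀ i, IsRDF (middleGraph (pathGraph n)) 3 (F i))
    (hsum : ∀ w, (∑ i, (F i w).card) ≤ 3) : d ≤ 4 := by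
  classical
  by_contra h
  push_neg at h
  set v0 : Fin n := ⟨0, by omega⟩ with hv0
  set E0 := pe n 0 (by omega : 0 + 1 < n) with hE0
  have huniq : ∀ u, (middleGraph (pathGraph n)).Adj (Sum.inl v0) u → u = Sum.inr E0 := by
    rintro (w | e) hadj
    · exact hadj.elim
    · obtain ⟨j, hj, hesk, _⟩ := edge_struct e.2
      have hv : v0 ∈ (e : Sym2 (Fin n)) := hadj
      rw [hesk, Sym2.mem_iff, Fin.ext_iff, Fin.ext_iff] at hv
      simp only [hv0] at hv
      have hj0 : j = 0 := by omega
      subst hj0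
      have : e = E0 := Subtype.ext (by rw [hesk]; rfl)
      rw [this]
  have key : ∀ i, F i (Sum.inl v0) = ∅ → F i (Sum.inr E0) = Finset.univ := by
    intro i hi
    apply Finset.eq_univ_of_forall
    intro c
    obtain ⟨u, hadj, hc⟩ := hrdf i _ hi c
    rwa [huniq u hadj] at hc
  set T := Finset.univ.filter (fun i : Fin d => F i (Sum.inl v0) = ∅) with hT
  have hTle : 3 * T.card ≤ 3 := by
    calc 3 * T.card = ∑ _i ∈ T, 3 := by rw [Finset.sum_const, smul_eq_mul, mul_comm]
    _ ≤ ∑ i ∈ T, (F i (Sum.inr E0)).card := Finset.sum_le_sum fun i hi => by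
          rw [key i (Finset.mem_filter.mp hi).2]
          simp
    _ ≤ ∑ i, (F i (Sum.inr E0)).card :=
          Finset.sum_le_sum_of_subset (Finset.subset_univ _)
    _ ≤ 3 := hsum _
  have hT1 : T.card ≤ 1 := by omega
  have hbig : (Finset.univ \ T).card ≤ ∑ i, (F i (Sum.inl v0)).card := by
    calc (Finset.univ \ T).card = ∑ _i ∈ Finset.univ \ T, 1 := by simp
    _ ≤ ∑ i ∈ Finset.univ \ T, (F i (Sum.inl v0)).card := Finset.sum_le_sum fun i hi => by
          rw [Finset.mem_sdiff, hT, Finset.mem_filter] at hi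
          have : F i (Sum.inl v0) ≠ ∅ := fun hc => hi.2 ⟨Finset.mem_univ _, hc⟩
          exact Finset.card_pos.mpr (Finset.nonempty_iff_ne_empty.mpr this)
    _ ≤ ∑ i, (F i (Sum.inl v0)).card :=
          Finset.sum_le_sum_of_subset (Finset.subset_univ _)
  have hcd : (Finset.univ \ T).card = d - T.card := by
    rw [Finset.card_sdiff_of_subset (Finset.subset_univ _), Finset.card_univ, Fintype.card_fin]
  have := hsum (Sum.inl v0)
  omega

/-- For even `n ≥ 4`, `d_{r3}(M(P_n)) = 4`. -/
theorem stmt12 (n : ℕ) (hn : 4 ≤ n) (he : Even n) :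
    rdomatic (middleGraph (pathGraph n)) 3 = 4 := by
  unfold rdomatic
  have h4 : 4 ∈ {d | ∃ F : Fin d → (Fin n ⊕ ((pathGraph n).edgeSet : Set (Sym2 (Fin n)))) → Finset (Fin 3),
      Function.Injective F ∧ (∀ i, IsRDF (middleGraph (pathGraph n)) 3 (F i)) ∧
      ∀ w, (∑ i, (F i w).card) ≤ 3} := by
    refine ⟨Fc n, Fc_inj n hn, ?_, sum_bound n⟩
    intro i
    by_cases h : i = 0
    · subst h; exact rdf0 n hn he
    · exact rdfi n hn i h
  have hub : ∀ d ∈ {d | ∃ F : Fin d → (Fin n ⊕ ((pathGraph n).edgeSet : Set (Sym2 (Fin n)))) → Finset (Fin 3),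
      Function.Injective F ∧ (∀ i, IsRDF (middleGraph (pathGraph n)) 3 (F i)) ∧
      ∀ w, (∑ i, (F i w).card) ≤ 3}, d ≤ 4 := by
    rintro d ⟨F, -, hrdf, hsum⟩
    exact ub n d hn F hrdf hsum
  exact le_antisymm (csSup_le ⟨4, h4⟩ hub) (le_csSup ⟨4, hub⟩ h4)
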